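/- Let ℂ((X)) be the field of formal Laurent series over ℂ and write t := X^{-1}, identifying ℂ((X)) with ℂ((t^{-1})) and ℂ[[X]] with ℂ[[t^{-1}]]. Let b ∈ ℂ with b ≠ 0 and c ∈ ℂ. Then the following identity of 2×2 matrices over ℂ((X)) holds: [[0, b],[−b^{-1}, t − c]] = [[1, b(t−c)^{-1}],[0, 1]] · [[t(t−c)^{-1}, 0],[0, (t−c)t^{-1}]] · [[t^{-1}, 0],[0, t]] · [[1, 0],[−b^{-1}(t−c)^{-1}, 1]]. Moreover the matrix on the left has determinant 1, the entries b(t−c)^{-1} and −b^{-1}(t−c)^{-1} lie in Xℂ[[X]] (coefficient of X^n vanishes for n ≤ 0), and t(t−c)^{-1} and (t−c)t^{-1} lie in 1 + Xℂ[[X]]. -/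

import Mathlib

/-- The Laurent series variable `X` in `ℂ((X)) ≅ ℂ((t⁻¹))`. -/
noncomputable def Xls : LaurentSeries ℂ := HahnSeries.single (1 : ℤ) (1 : ℂ)

/-- The element `t = X⁻¹` of `ℂ((X))`, modelling the variable `t` of `ℂ((t⁻¹))`. -/
noncomputable def tls : LaurentSeries ℂ := Xls⁻¹

/-- The inclusion of constants `ℂ → ℂ((X))`. -/
noncomputable def Cls : ℂ →+* LaurentSeries ℂ := algebraMap ℂ (LaurentSeries ℂ)

lemma Cls_eq_single (a : ℂ) : Cls a = HahnSeries.single (0 : ℤ) a := by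
  rw [Cls, HahnSeries.algebraMap_apply', ← PowerSeries.C_eq_algebraMap,
    HahnSeries.ofPowerSeries_C, HahnSeries.C_apply]

lemma Cls_mul_coeff (a : ℂ) (x : LaurentSeries ℂ) (n : ℤ) :
    (Cls a * x).coeff n = a * x.coeff n := by
  rw [Cls_eq_single, HahnSeries.coeff_single_zero_mul]

lemma Xls_ne_zero : Xls ≠ 0 := HahnSeries.single_ne_zero one_ne_zero

/-- The Gauss decomposition from the proof of Lemma 5.3 ('le:W0alphai') of the paper:
for `b ≠ 0`, the matrix `[[0, b],[−b⁻¹, t−c]]` factors as an element of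
`U₁[[t⁻¹]] · T₁[[t⁻¹]] · t^{−α^∨} · U_{−,1}[[t⁻¹]]` for `SL₂`; moreover it has determinant `1`,
the unipotent entries lie in `Xℂ[[X]]`, and the torus entries lie in `1 + Xℂ[[X]]`. -/
theorem W0alphai_gauss_decomposition (b c : ℂ) (hb : b ≠ 0) :
    (!![0, Cls b; -(Cls b)⁻¹, tls - Cls c]
      = !![1, Cls b * (tls - Cls c)⁻¹; 0, 1] *
        !![tls * (tls - Cls c)⁻¹, 0; 0, (tls - Cls c) * tls⁻¹] *
        !![tls⁻¹, 0; 0, tls] *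
        !![1, 0; -(Cls b)⁻¹ * (tls - Cls c)⁻¹, 1]) ∧
    (!![0, Cls b; -(Cls b)⁻¹, tls - Cls c] : Matrix (Fin 2) (Fin 2) (LaurentSeries ℂ)).det = 1 ∧
    (∀ n : ℤ, n ≤ 0 → (Cls b * (tls - Cls c)⁻¹).coeff n = 0) ∧
    (∀ n : ℤ, n ≤ 0 → (-(Cls b)⁻¹ * (tls - Cls c)⁻¹).coeff n = 0) ∧
    ((tls * (tls - Cls c)⁻¹).coeff 0 = 1 ∧
      ∀ n : ℤ, n < 0 → (tls * (tls - Cls c)⁻¹).coeff n = 0) ∧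
    (((tls - Cls c) * tls⁻¹).coeff 0 = 1 ∧
      ∀ n : ℤ, n < 0 → ((tls - Cls c) * tls⁻¹).coeff n = 0) := by
  have hX : Xls ≠ 0 := Xls_ne_zero
  have hXi : Xls⁻¹ * Xls = 1 := inv_mul_cancel₀ hX
  have ht : tls ≠ 0 := inv_ne_zero hX
  have hCb : Cls b ≠ 0 := by
    simpa using (map_ne_zero Cls).mpr hb
  -- the power series `P = 1 - c X` and its inverse
  set P : PowerSeries ℂ := 1 - PowerSeries.C c * PowerSeries.X with hP
  have hPc : PowerSeries.constantCoeff P = 1 := by simp [hP]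
  have hPinv : P * P⁻¹ = 1 := PowerSeries.mul_inv_cancel _ (by rw [hPc]; exact one_ne_zero)
  set Q : LaurentSeries ℂ := ((P⁻¹ : PowerSeries ℂ) : LaurentSeries ℂ) with hQ
  have hcoeP : ((P : PowerSeries ℂ) : LaurentSeries ℂ) = 1 - Cls c * Xls := by
    rw [hP]
    push_cast
    rw [PowerSeries.coe_C, PowerSeries.coe_X, Xls, Cls_eq_single, HahnSeries.C_apply]
  have hQ1 : (1 - Cls c * Xls) * Q = 1 := by
    rw [← hcoeP, hQ, ← PowerSeries.coe_mul, hPinv]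
    exact PowerSeries.coe_one
  have hu : tls - Cls c = Xls⁻¹ * (1 - Cls c * Xls) := by
    rw [mul_sub, mul_one, tls]
    congr 1
    rw [mul_comm (Cls c) Xls, ← mul_assoc, hXi, one_mul]
  have hone : (1 - Cls c * Xls) ≠ 0 := left_ne_zero_of_mul_eq_one hQ1
  have hune : tls - Cls c ≠ 0 := by
    rw [hu]
    exact mul_ne_zero (inv_ne_zero hX) hone
  have huinv : (tls - Cls c)⁻¹ = Xls * Q := by
    apply inv_eq_of_mul_eq_one_right
    rw [hu, mul_mul_mul_comm, hXi, one_mul, hQ1]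
  -- coefficient facts for `Q`
  have hQneg : ∀ n : ℤ, n < 0 → Q.coeff n = 0 := by
    intro n hn
    rw [hQ, PowerSeries.coeff_coe, if_pos hn]
  have hQ0 : Q.coeff 0 = 1 := by
    rw [hQ, PowerSeries.coeff_coe, if_neg (lt_irrefl 0)]
    simp [PowerSeries.constantCoeff_inv, hPc]
  have hXQ : ∀ n : ℤ, (Xls * Q).coeff n = Q.coeff (n - 1) := by
    intro n
    have h2 : n - 1 + 1 = n := by ring
    have h3 := HahnSeries.coeff_single_mul_add (r := (1 : ℂ)) (x := Q) (a := n - 1) (b := 1)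
    rw [h2, one_mul] at h3
    rw [Xls, h3]
  refine ⟨?_, ?_, ?_, ?_, ?_, ?_⟩
  · apply Matrix.ext
    intro i j
    have h1 : Cls b * (Cls b)⁻¹ = 1 := mul_inv_cancel₀ hCb
    have h2 : tls * tls⁻¹ = 1 := mul_inv_cancel₀ ht
    have h3 : (tls - Cls c) * (tls - Cls c)⁻¹ = 1 := mul_inv_cancel₀ hune
    fin_cases i <;> fin_cases j
    all_goals simp [Matrix.mul_apply, Fin.sum_univ_succ]
    · linear_combination (tls - Cls c)⁻¹ * tls * tls⁻¹ * Cls b * (Cls b)⁻¹ * h3 +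
        (tls - Cls c)⁻¹ * tls * tls⁻¹ * h1
    · linear_combination (-(Cls b) * (tls - Cls c) * (tls - Cls c)⁻¹) * h2 - Cls b * h3
    · linear_combination ((Cls b)⁻¹ * (tls - Cls c) * (tls - Cls c)⁻¹) * h2 + (Cls b)⁻¹ * h3
    · linear_combination (-(tls - Cls c)) * h2
  · rw [Matrix.det_fin_two_of]
    linear_combination mul_inv_cancel₀ hCb
  · intro n hn
    rw [huinv, Cls_mul_coeff, hXQ, hQneg (n - 1) (by omega), mul_zero]
  · intro n hn
    have : -(Cls b)⁻¹ = Cls (-b⁻¹) := by rw [map_neg, map_inv₀]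
    rw [this, huinv, Cls_mul_coeff, hXQ, hQneg (n - 1) (by omega), mul_zero]
  · have hQQ : tls * (tls - Cls c)⁻¹ = Q := by
      rw [huinv, tls, ← mul_assoc, hXi, one_mul]
    rw [hQQ]
    exact ⟨hQ0, hQneg⟩
  · have hti : tls⁻¹ = Xls := by rw [tls, inv_inv]
    have huX : (tls - Cls c) * tls⁻¹ = 1 - Cls c * Xls := by
      rw [hti, hu, mul_comm Xls⁻¹, mul_assoc, hXi, mul_one]
    rw [huX]
    constructor
    · rw [HahnSeries.coeff_sub, Cls_mul_coeff]
      simp [Xls, HahnSeries.coeff_single]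
    · intro n hn
      rw [HahnSeries.coeff_sub, Cls_mul_coeff]
      have : (HahnSeries.single (1 : ℤ) (1 : ℂ)).coeff n = 0 :=
        HahnSeries.coeff_single_of_ne (by omega)
      rw [Xls, this, HahnSeries.coeff_one, if_neg (by omega), mul_zero, sub_zero]
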